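/- Let K be a real symmetric positive definite n×n matrix, let e : Fin m → Fin n be injective, with K_CC := K∘(e,e), K_XC := K∘(id,e), K_CX := (K_XC)ᵀ, and Q := K_XC K_CC⁻¹ K_CX. For every α ∈ ℝⁿ and every β' ∈ ℝᵐ, writing δ' := α − ι(β') with ι the extension by zero along e, one has δ'ᵀ K δ' ≥ αᵀ (K − Q) α, with equality when β' = K_CC⁻¹ K_CX α. -/

import Mathlib

open Matrix

noncomputable section

/-- The `n × m` matrix `K_XC` of kernel evaluations between all points and control points. -/
def KXC {n m : ℕ} (K : Matrix (Fin n) (Fin n) ℝ) (e : Fin m → Fin n) :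
    Matrix (Fin n) (Fin m) ℝ :=
  K.submatrix id e

/-- The `m × m` control-point kernel matrix `K_CC`. -/
def KCC {n m : ℕ} (K : Matrix (Fin n) (Fin n) ℝ) (e : Fin m → Fin n) :
    Matrix (Fin m) (Fin m) ℝ :=
  K.submatrix e e

/-- The `m × n` matrix `K_CX = (K_XC)ᵀ`. -/
def KCX {n m : ℕ} (K : Matrix (Fin n) (Fin n) ℝ) (e : Fin m → Fin n) :
    Matrix (Fin m) (Fin n) ℝ :=
  (KXC K e)ᵀ

/-- The Nyström approximation `Q = K_XC ⬝ K_CC⁻¹ ⬝ K_CX` of `K` based on control indices `e`. -/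
def nystrom {n m : ℕ} (K : Matrix (Fin n) (Fin n) ℝ) (e : Fin m → Fin n) :
    Matrix (Fin n) (Fin n) ℝ :=
  KXC K e * (KCC K e)⁻¹ * KCX K e

end

section Aux

variable {n m : ℕ}

lemma ext_dot (e : Fin m → Fin n) (he : Function.Injective e) (β' : Fin m → ℝ)
    (v : Fin n → ℝ) : Function.extend e β' 0 ⬝ᵥ v = β' ⬝ᵥ (v ∘ e) := by
  classical
  unfold dotProduct
  rw [← Finset.sum_subset (Finset.subset_univ (Finset.univ.image e))
      (fun j _ hj => by
        rw [Function.extend_apply' _ _ _ (by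
          simp only [Finset.mem_image, Finset.mem_univ, true_and] at hj
          exact fun ⟨a, ha⟩ => hj ⟨a, ha⟩)]
        simp),
    Finset.sum_image (fun a _ b _ h => he h)]
  simp [he.extend_apply]

lemma ext_ne (e : Fin m → Fin n) (he : Function.Injective e) (β' : Fin m → ℝ)
    (hβ : β' ≠ 0) : Function.extend e β' 0 ≠ 0 := by
  intro h
  apply hβ
  funext k
  have := congrFun h (e k)
  rwa [he.extend_apply] at this

lemma mulVec_ext (K : Matrix (Fin n) (Fin n) ℝ) (e : Fin m → Fin n)
    (he : Function.Injective e) (β' : Fin m → ℝ) :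
    K *ᵥ Function.extend e β' 0 = KXC K e *ᵥ β' := by
  funext i
  rw [mulVec, dotProduct_comm, ext_dot e he]
  simp [mulVec, dotProduct, KXC, mul_comm]

end Aux

lemma comp_e {n m : ℕ} (K : Matrix (Fin n) (Fin n) ℝ) (e : Fin m → Fin n)
    (x : Fin m → ℝ) : (KXC K e *ᵥ x) ∘ e = KCC K e *ᵥ x := by
  funext k
  simp [KXC, KCC, mulVec, dotProduct]

lemma KCC_posDef {n m : ℕ} (K : Matrix (Fin n) (Fin n) ℝ) (hK : K.PosDef)
    (e : Fin m → Fin n) (he : Function.Injective e) : (KCC K e).PosDef := by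
  refine posDef_iff_dotProduct_mulVec.mpr ⟨?_, ?_⟩
  · exact hK.isHermitian.submatrix e
  · intro x hx
    have hq : (star x) ⬝ᵥ (KCC K e *ᵥ x)
        = (star (Function.extend e x 0)) ⬝ᵥ (K *ᵥ Function.extend e x 0) := by
      simp only [star_trivial]
      rw [mulVec_ext K e he, ext_dot e he, comp_e]
    rw [hq]
    exact hK.dotProduct_mulVec_pos (ext_ne e he x hx)


/-- Optimality of the orthogonal projection: for every `α ∈ ℝⁿ` and every
candidate control-point weight vector `β'`, the residual `δ' = α − ι(β')` satisfies
`δ'ᵀ K δ' ≥ αᵀ (K − Q) α`, with equality when `β' = K_CC⁻¹ K_CX α`. -/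
theorem projection_residual_optimality {n m : ℕ}
    (K : Matrix (Fin n) (Fin n) ℝ) (hK : K.PosDef)
    (e : Fin m → Fin n) (he : Function.Injective e)
    (α : Fin n → ℝ) (β' : Fin m → ℝ) :
    let δ' := α - Function.extend e β' 0
    α ⬝ᵥ ((K - nystrom K e) *ᵥ α) ≤ δ' ⬝ᵥ (K *ᵥ δ') ∧
      (β' = (KCC K e)⁻¹ *ᵥ (KCX K e *ᵥ α) →
        δ' ⬝ᵥ (K *ᵥ δ') = α ⬝ᵥ ((K - nystrom K e) *ᵥ α)) := by
  intro δ'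
  have hKt : Kᵀ = K := by
    have := hK.isHermitian
    simpa [Matrix.IsHermitian] using this
  set ι : Fin n → ℝ := Function.extend e β' 0 with hι
  set S := KCC K e with hSdef
  set c := KCX K e *ᵥ α with hc
  set βs := S⁻¹ *ᵥ c with hβs
  have hS : S.PosDef := KCC_posDef K hK e he
  have hdet : IsUnit S.det := isUnit_iff_ne_zero.mpr hS.det_pos.ne'
  have hSinv : S * S⁻¹ = 1 := mul_nonsing_inv S hdet
  have hSt : Sᵀ = S := by
    have := hS.isHermitian
    simpa [Matrix.IsHermitian] using this
  have hSβs : S *ᵥ βs = c := by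
    rw [hβs, mulVec_mulVec, hSinv, one_mulVec]
  have h1 : α ⬝ᵥ (K *ᵥ ι) = c ⬝ᵥ β' := by
    rw [hι, mulVec_ext K e he, dotProduct_mulVec, hc, KCX, ← mulVec_transpose]
  have hce : (K *ᵥ α) ∘ e = c := by
    funext k
    simp only [hc, KCX, KXC, Function.comp_apply, mulVec, dotProduct,
      transpose_apply, submatrix_apply, id]
    exact Finset.sum_congr rfl fun j _ => by
      rw [show K j (e k) = K (e k) j from (congrFun (congrFun hKt j) (e k)).symm, mul_comm]
  have h2 : ι ⬝ᵥ (K *ᵥ α) = β' ⬝ᵥ c := by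
    rw [hι, ext_dot e he, hce]
  have h3 : ι ⬝ᵥ (K *ᵥ ι) = β' ⬝ᵥ (S *ᵥ β') := by
    rw [hι, mulVec_ext K e he, ext_dot e he, comp_e, hSdef]
  have h4 : α ⬝ᵥ (nystrom K e *ᵥ α) = c ⬝ᵥ (S⁻¹ *ᵥ c) := by
    rw [nystrom, ← hSdef, ← mulVec_mulVec, ← mulVec_mulVec, ← hc,
      dotProduct_mulVec, show α ᵥ* KXC K e = c by rw [hc, KCX, mulVec_transpose]]
  set γ := β' - βs with hγ
  have h5 : γ ⬝ᵥ (S *ᵥ γ) = β' ⬝ᵥ (S *ᵥ β') - β' ⬝ᵥ c - c ⬝ᵥ β' + c ⬝ᵥ (S⁻¹ *ᵥ c) := by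
    have hβsS : βs ⬝ᵥ (S *ᵥ β') = c ⬝ᵥ β' := by
      rw [dotProduct_mulVec, ← mulVec_transpose, hSt, hSβs]
    have hβsc : βs ⬝ᵥ (S *ᵥ βs) = c ⬝ᵥ (S⁻¹ *ᵥ c) := by
      rw [hSβs, dotProduct_comm, hβs]
    rw [hγ, sub_dotProduct, mulVec_sub, dotProduct_sub, dotProduct_sub, hβsc, hβsS, hSβs]
    ring
  have hnn : 0 ≤ γ ⬝ᵥ (S *ᵥ γ) := by
    have := hS.posSemidef.dotProduct_mulVec_nonneg γ
    simpa using this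
  have hdc : β' ⬝ᵥ c = c ⬝ᵥ β' := dotProduct_comm _ _
  have hL : δ' ⬝ᵥ (K *ᵥ δ') = α ⬝ᵥ (K *ᵥ α) - c ⬝ᵥ β' - β' ⬝ᵥ c + β' ⬝ᵥ (S *ᵥ β') := by
    show (α - ι) ⬝ᵥ (K *ᵥ (α - ι)) = _
    rw [mulVec_sub, sub_dotProduct, dotProduct_sub, dotProduct_sub, h1, h2, h3]
    ring
  have hR : α ⬝ᵥ ((K - nystrom K e) *ᵥ α) = α ⬝ᵥ (K *ᵥ α) - c ⬝ᵥ (S⁻¹ *ᵥ c) := by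
    rw [sub_mulVec, dotProduct_sub, h4]
  constructor
  · rw [hL, hR]; linarith
  · intro hb
    have hγ0 : γ = 0 := by rw [hγ, hb, hβs]; exact sub_self _
    rw [hγ0] at h5
    simp only [zero_dotProduct] at h5
    rw [hL, hR]; linarith
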